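/- Let U = {u, v, w} be the basis of a 3-maximal submonoid of Σ*, let A = {𝐚, 𝐛, 𝐜} be a three-letter alphabet, and let h : A* → Σ* be the monoid morphism with h(𝐚) = u, h(𝐛) = v, h(𝐜) = w. Then for all 𝐮, 𝐮' ∈ A*, the word h(𝐮) is a prefix of h(𝐮') if and only if 𝐮 is a prefix of 𝐮'. -/

import Mathlib

/-- The basis of a submonoid `M` of the free monoid `Σ*`: `(M \ {ε}) \ (M \ {ε})²`. -/
def basisOf {α : Type*} (M : Submonoid (FreeMonoid α)) : Set (FreeMonoid α) :=
  ((M : Set (FreeMonoid α)) \ {1}) \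
    {w | ∃ u ∈ (M : Set (FreeMonoid α)) \ {1}, ∃ v ∈ (M : Set (FreeMonoid α)) \ {1}, w = u * v}

/-- A submonoid of `Σ*` is `k`-maximal if its rank (cardinality of its basis) is at most `k`
and it is maximal (w.r.t. inclusion) among submonoids of rank at most `k`. -/
def IsKMaximal {α : Type*} (k : ℕ) (M : Submonoid (FreeMonoid α)) : Prop :=
  (basisOf M).Finite ∧ (basisOf M).ncard ≤ k ∧
    ∀ M' : Submonoid (FreeMonoid α),
      (basisOf M').Finite → (basisOf M').ncard ≤ k → M ≤ M' → M = M'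

/-- Every element of `closure S` is `1`, in `S`, or a product of two nontrivial elements. -/
lemma mem_closure_cases {α : Type*} (S : Set (FreeMonoid α)) {m : FreeMonoid α}
    (hm : m ∈ Submonoid.closure S) :
    m = 1 ∨ m ∈ S ∨
      ∃ a ∈ (Submonoid.closure S : Set (FreeMonoid α)) \ {1},
        ∃ b ∈ (Submonoid.closure S : Set (FreeMonoid α)) \ {1}, m = a * b := by
  induction hm using Submonoid.closure_induction with
  | mem x hx => exact Or.inr (Or.inl hx)
  | one => exact Or.inl rfl
  | mul x y hx hy px py =>
    by_cases hx1 : x = 1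
    · subst hx1; rw [one_mul]; exact py
    by_cases hy1 : y = 1
    · subst hy1; rw [mul_one]; exact px
    exact Or.inr (Or.inr ⟨x, ⟨hx, hx1⟩, y, ⟨hy, hy1⟩, rfl⟩)

/-- The basis of `closure S` is contained in `S`. -/
lemma basisOf_closure_subset {α : Type*} (S : Set (FreeMonoid α)) :
    basisOf (Submonoid.closure S) ⊆ S := by
  rintro m ⟨⟨hmem, hne⟩, hnp⟩
  rcases mem_closure_cases S hmem with h1 | hS | hp
  · exact absurd h1 hne
  · exact hS
  · exact absurd hp hnp

/-- A list-level prefix of free monoid elements gives a monoid-level prefix. -/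
lemma freeMonoid_prefix {α : Type*} {x y : FreeMonoid α}
    (h : FreeMonoid.toList x <+: FreeMonoid.toList y) : ∃ t, y = x * t := by
  obtain ⟨t, ht⟩ := h
  refine ⟨FreeMonoid.ofList t, FreeMonoid.toList.injective ?_⟩
  simp only [FreeMonoid.toList_mul, FreeMonoid.toList_ofList]
  exact ht.symm

/-- If `{u, v, w}` is the basis of a 3-maximal submonoid and `h` is the morphism
from the free monoid over a three-letter alphabet sending the letters to `u`, `v`, `w`,
then `h 𝐮` is a prefix of `h 𝐮'` iff `𝐮` is a prefix of `𝐮'`. -/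
theorem prefix_iff_prefix_of_kMaximal {α : Type*} (u v w : FreeMonoid α)
    (hcard : ({u, v, w} : Set (FreeMonoid α)).ncard = 3)
    (hbasis : basisOf (Submonoid.closure {u, v, w}) = {u, v, w})
    (hmax : IsKMaximal 3 (Submonoid.closure ({u, v, w} : Set (FreeMonoid α))))
    (h : FreeMonoid (Fin 3) →* FreeMonoid α)
    (ha : h (FreeMonoid.of 0) = u) (hb : h (FreeMonoid.of 1) = v)
    (hc : h (FreeMonoid.of 2) = w) :
    ∀ p q : FreeMonoid (Fin 3),
      (∃ z : FreeMonoid α, h q = h p * z) ↔ (∃ z : FreeMonoid (Fin 3), q = p * z) := by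
  set S : Set (FreeMonoid α) := {u, v, w} with hS
  set M := Submonoid.closure S with hM
  have hSfin : S.Finite := (Set.finite_singleton w).insert v |>.insert u
  -- every element of S is ≠ 1 and in M
  have hne1 : ∀ x ∈ S, x ≠ (1 : FreeMonoid α) := by
    intro x hx
    have : x ∈ basisOf M := hbasis ▸ hx
    exact this.1.2
  -- the basis S is a prefix code: no element is a proper prefix of another
  have hcode : ∀ x ∈ S, ∀ y ∈ S, (∃ t, y = x * t) → x = y := by
    rintro x hx y hy ⟨t, ht⟩
    by_cases ht1 : t = 1
    · rw [ht, ht1, mul_one]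
    exfalso
    have hxy : x ≠ y := by
      intro hxyeq
      apply ht1
      have h2 : x * 1 = x * t := by rw [mul_one, ← ht]; exact hxyeq
      exact (mul_left_cancel h2).symm
    -- the enlarged generating set
    set S' : Set (FreeMonoid α) := insert t (S \ {y}) with hS'
    have hSsub : S ⊆ (Submonoid.closure S' : Set (FreeMonoid α)) := by
      intro z hz
      by_cases hzy : z = y
      · subst hzy
        rw [ht]
        exact mul_mem (Submonoid.subset_closure (Or.inr ⟨hx, hxy⟩))
          (Submonoid.subset_closure (Or.inl rfl))
      · exact Submonoid.subset_closure (Or.inr ⟨hz, hzy⟩)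
    have hle : M ≤ Submonoid.closure S' := by
      rw [hM]; exact Submonoid.closure_le.mpr hSsub
    have hS'fin : S'.Finite := ((hSfin.diff).insert t)
    have hbfin : (basisOf (Submonoid.closure S')).Finite :=
      hS'fin.subset (basisOf_closure_subset S')
    have hS'card : S'.ncard ≤ 3 := by
      have h1 : (S \ {y}).ncard < S.ncard :=
        Set.ncard_diff_singleton_lt_of_mem hy hSfin
      have h2 : S'.ncard ≤ (S \ {y}).ncard + 1 := Set.ncard_insert_le _ _
      omega
    have hbcard : (basisOf (Submonoid.closure S')).ncard ≤ 3 :=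
      le_trans (Set.ncard_le_ncard (basisOf_closure_subset S') hS'fin) hS'card
    have heq : M = Submonoid.closure S' := hmax.2.2 _ hbfin hbcard hle
    have htM : t ∈ M := heq ▸ Submonoid.subset_closure (Or.inl rfl)
    have hxM : x ∈ M := Submonoid.subset_closure hx
    have hyb : y ∈ basisOf M := hbasis ▸ hy
    exact hyb.2 ⟨x, ⟨hxM, hne1 x hx⟩, t, ⟨htM, ht1⟩, ht⟩
  -- images of letters are in S
  have hlet : ∀ a : Fin 3, h (FreeMonoid.of a) ∈ S := by
    intro a
    fin_cases a
    · show h (FreeMonoid.of 0) ∈ S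
      rw [ha]; exact Or.inl rfl
    · show h (FreeMonoid.of 1) ∈ S
      rw [hb]; exact Or.inr (Or.inl rfl)
    · show h (FreeMonoid.of 2) ∈ S
      rw [hc]; exact Or.inr (Or.inr rfl)
  -- u, v, w are pairwise distinct
  have hcard' : ({u, v, w} : Set (FreeMonoid α)).ncard = 3 := hS ▸ hcard
  have hpair : ∀ a b : FreeMonoid α, ({a, b} : Set (FreeMonoid α)).ncard ≤ 2 := fun a b =>
    le_trans (Set.ncard_insert_le _ _) (by rw [Set.ncard_singleton])
  have hdist : u ≠ v ∧ u ≠ w ∧ v ≠ w := by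
    refine ⟨?_, ?_, ?_⟩ <;> intro heq
    · rw [heq, Set.insert_idem] at hcard'
      have := hpair v w; omega
    · rw [heq, Set.insert_comm, Set.pair_eq_singleton] at hcard'
      have := hpair v w; omega
    · rw [heq, Set.pair_eq_singleton] at hcard'
      have := hpair u w; omega
  -- letters with equal images are equal
  have hinj : ∀ a b : Fin 3, h (FreeMonoid.of a) = h (FreeMonoid.of b) → a = b := by
    intro a b hab
    obtain ⟨huv, huw, hvw⟩ := hdist
    fin_cases a <;> fin_cases b <;>
      first
      | rfl
      | exact absurd (show u = v by rw [← ha, ← hb]; exact hab) huv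
      | exact absurd (show v = u by rw [← hb, ← ha]; exact hab) (Ne.symm huv)
      | exact absurd (show u = w by rw [← ha, ← hc]; exact hab) huw
      | exact absurd (show w = u by rw [← hc, ← ha]; exact hab) (Ne.symm huw)
      | exact absurd (show v = w by rw [← hb, ← hc]; exact hab) hvw
      | exact absurd (show w = v by rw [← hc, ← hb]; exact hab) (Ne.symm hvw)
  -- main result
  intro p q
  constructor
  · -- hard direction, induction on p generalizing q
    induction p using FreeMonoid.recOn generalizing q with
    | one => intro _; exact ⟨q, (one_mul q).symm⟩
    | of_mul a p' ih =>
      rintro ⟨z, hz⟩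
      induction q using FreeMonoid.recOn with
      | one =>
        exfalso
        rw [map_one, map_mul] at hz
        have : FreeMonoid.toList (h (FreeMonoid.of a)) = [] := by
          have := congrArg FreeMonoid.toList hz
          simp only [FreeMonoid.toList_mul, FreeMonoid.toList_one] at this
          rcases List.append_eq_nil_iff.mp this.symm with ⟨h1, _⟩
          exact (List.append_eq_nil_iff.mp h1).1
        exact hne1 _ (hlet a) (FreeMonoid.toList.injective this)
      | of_mul b q' _ =>
        rw [map_mul, map_mul, mul_assoc] at hz
        -- hz : h (of b) * h q' = h (of a) * (h p' * z)
        have hlist : FreeMonoid.toList (h (FreeMonoid.of b)) ++ FreeMonoid.toList (h q')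
            = FreeMonoid.toList (h (FreeMonoid.of a)) ++ FreeMonoid.toList (h p' * z) := by
          have := congrArg FreeMonoid.toList hz
          simpa only [FreeMonoid.toList_mul] using this
        have hcomp := List.prefix_or_prefix_of_prefix
          ⟨FreeMonoid.toList (h q'), hlist⟩ ⟨FreeMonoid.toList (h p' * z), rfl⟩
        have hab : h (FreeMonoid.of a) = h (FreeMonoid.of b) := by
          rcases hcomp with hpre | hpre
          · exact (hcode _ (hlet b) _ (hlet a) (freeMonoid_prefix hpre)).symm
          · exact hcode _ (hlet a) _ (hlet b) (freeMonoid_prefix hpre)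
        have hab' : a = b := hinj a b hab
        subst hab'
        rw [hab] at hz
        have hz' : h q' = h p' * z := mul_left_cancel hz
        obtain ⟨z', hz''⟩ := ih q' ⟨z, hz'⟩
        exact ⟨z', by rw [hz'', mul_assoc]⟩
  · rintro ⟨z, rfl⟩
    exact ⟨h z, by rw [map_mul]⟩
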